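/- Fix natural numbers 0 < n_0 < n_N < n_T and let C = ℝ^{n_N} × {0} ⊆ ℝ^{n_T}. Let D = ∂²/∂x¹∂x^{n_T} acting on smooth functions ℝ^{n_T} → ℝ. Then: (1) the function h(x) = x¹·x^{n_T} lies in the 0-component, but D(h) = 1 does not lie in the 0-component; hence D is not a constraint linear map. (2) Nevertheless, its Hochschild coboundary δD is a constraint bilinear map lying in the 0-component: for all smooth f, g in the N-component, (δD)(f,g) = −(∂f/∂x¹)(∂g/∂x^{n_T}) − (∂f/∂x^{n_T})(∂g/∂x¹) vanishes at every point of C. -/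

import Mathlib

/-- The partial derivative in the `i`-th coordinate direction on `ℝ^{n_T}`. -/
noncomputable def pderiv1 {nT : ℕ} (i : Fin nT) (f : (Fin nT → ℝ) → ℝ) :
    (Fin nT → ℝ) → ℝ :=
  fun x => fderiv ℝ f x (Pi.single i 1)

/-- Membership in the coordinate subspace `C = ℝ^{n_N} × {0}`
(`0`-indexed: `x^i = 0` for `n_N ≤ i`). -/
def OnC {nT : ℕ} (nN : ℕ) (x : Fin nT → ℝ) : Prop :=
  ∀ i : Fin nT, nN ≤ i.val → x i = 0

/-- `f` lies in the `N`-component: `∂f/∂x^i` vanishes on `C` for all `i ∈ {1,…,n_0}`. -/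
def MemN {nT : ℕ} (n0 nN : ℕ) (f : (Fin nT → ℝ) → ℝ) : Prop :=
  ∀ i : Fin nT, i.val < n0 → ∀ x, OnC nN x → pderiv1 i f x = 0

/-- `f` lies in the `0`-component: `f` vanishes on `C`. -/
def MemZ {nT : ℕ} (nN : ℕ) (f : (Fin nT → ℝ) → ℝ) : Prop :=
  ∀ x, OnC nN x → f x = 0

/-- A bilinear map on smooth functions is constraint if it maps pairs of `N`-component
functions to the `N`-component and maps a pair into the `0`-component whenever one
argument is in the `0`-component and the other in the `N`-component. -/
def IsConstraintBilin {nT : ℕ} (n0 nN : ℕ)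
    (B : ((Fin nT → ℝ) → ℝ) → ((Fin nT → ℝ) → ℝ) → (Fin nT → ℝ) → ℝ) : Prop :=
  (∀ f g, ContDiff ℝ (⊤ : ℕ∞) f → ContDiff ℝ (⊤ : ℕ∞) g →
      MemN n0 nN f → MemN n0 nN g → MemN n0 nN (B f g)) ∧
  ∀ f g, ContDiff ℝ (⊤ : ℕ∞) f → ContDiff ℝ (⊤ : ℕ∞) g →
      ((MemZ nN f ∧ MemN n0 nN g) ∨ (MemN n0 nN f ∧ MemZ nN g)) → MemZ nN (B f g)

/-- The Hochschild coboundary of a linear operator: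
`(δD)(f,g) = f·D(g) − D(f·g) + D(f)·g`. -/
def hdelOp {nT : ℕ} (D : ((Fin nT → ℝ) → ℝ) → (Fin nT → ℝ) → ℝ)
    (f g : (Fin nT → ℝ) → ℝ) : (Fin nT → ℝ) → ℝ :=
  fun x => f x * D g x - D (fun y => f y * g y) x + D f x * g x

lemma pderiv1_contDiff {nT : ℕ} (i : Fin nT) {f : (Fin nT → ℝ) → ℝ}
    (hf : ContDiff ℝ (⊤:ℕ∞) f) : ContDiff ℝ (⊤:ℕ∞) (pderiv1 i f) := by
  have h : ContDiff ℝ ((⊤:ℕ∞) : WithTop ℕ∞) (fderiv ℝ f) :=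
    hf.fderiv_right (by exact_mod_cast le_refl ((⊤:ℕ∞) : WithTop ℕ∞))
  exact h.clm_apply contDiff_const

lemma pderiv1_mul {nT : ℕ} (i : Fin nT) {f g : (Fin nT → ℝ) → ℝ} {x}
    (hf : DifferentiableAt ℝ f x) (hg : DifferentiableAt ℝ g x) :
    pderiv1 i (fun y => f y * g y) x = f x * pderiv1 i g x + pderiv1 i f x * g x := by
  simp [pderiv1, fderiv_fun_mul hf hg]; ring

lemma pderiv1_add {nT : ℕ} (i : Fin nT) {f g : (Fin nT → ℝ) → ℝ} {x}
    (hf : DifferentiableAt ℝ f x) (hg : DifferentiableAt ℝ g x) :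
    pderiv1 i (fun y => f y + g y) x = pderiv1 i f x + pderiv1 i g x := by
  simp [pderiv1, fderiv_fun_add hf hg]

/-- derivative in a tangent direction of a function vanishing on C vanishes on C -/
lemma tangent_deriv {nT nN : ℕ} {φ : (Fin nT → ℝ) → ℝ} (hφ : Differentiable ℝ φ)
    (hz : MemZ nN φ) {i : Fin nT} (hi : i.val < nN) {x} (hx : OnC nN x) :
    pderiv1 i φ x = 0 := by
  set v : Fin nT → ℝ := Pi.single i 1 with hv
  have hγ : ∀ t : ℝ, HasDerivAt (fun t : ℝ => x + t • v) v t := by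
    intro t
    simpa using ((hasDerivAt_id t).smul_const v).const_add x
  have hcomp : HasDerivAt (fun t : ℝ => φ (x + t • v)) (fderiv ℝ φ x v) 0 := by
    have hf : HasFDerivAt φ (fderiv ℝ φ x) (x + (0:ℝ) • v) := by
      simpa using hφ.differentiableAt.hasFDerivAt (x := x)
    exact hf.comp_hasDerivAt 0 (hγ 0)
  have hzero : (fun t : ℝ => φ (x + t • v)) = fun _ => 0 := by
    funext t
    apply hz
    intro j hj
    have hne : j ≠ i := by
      intro h; subst h; omega
    simp [hv, Pi.single_eq_of_ne hne, hx j hj]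
  rw [hzero] at hcomp
  have := hcomp.unique (hasDerivAt_const 0 (0:ℝ))
  simpa [pderiv1, hv] using this

lemma contdiff_differentiable {nT : ℕ} {f : (Fin nT → ℝ) → ℝ}
    (hf : ContDiff ℝ (⊤:ℕ∞) f) : Differentiable ℝ f :=
  hf.differentiable (by simp)

lemma D_mul {nT : ℕ} (i0 iT : Fin nT) {f g : (Fin nT → ℝ) → ℝ}
    (hf : ContDiff ℝ (⊤:ℕ∞) f) (hg : ContDiff ℝ (⊤:ℕ∞) g) (x : Fin nT → ℝ) :
    pderiv1 i0 (pderiv1 iT (fun y => f y * g y)) x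
      = f x * pderiv1 i0 (pderiv1 iT g) x + pderiv1 i0 f x * pderiv1 iT g x
        + pderiv1 iT f x * pderiv1 i0 g x + pderiv1 i0 (pderiv1 iT f) x * g x := by
  have hf' := contdiff_differentiable hf
  have hg' := contdiff_differentiable hg
  have hfT := pderiv1_contDiff iT hf
  have hgT := pderiv1_contDiff iT hg
  have h1 : pderiv1 iT (fun y => f y * g y)
      = fun y => (f y * pderiv1 iT g y) + (pderiv1 iT f y * g y) :=
    funext fun y => pderiv1_mul iT (hf' y) (hg' y)
  rw [h1]
  rw [pderiv1_add i0 ((hf.mul hgT).differentiable (by simp) x)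
    ((hfT.mul hg).differentiable (by simp) x)]
  rw [pderiv1_mul i0 (hf' x) (contdiff_differentiable hgT x),
    pderiv1_mul i0 (contdiff_differentiable hfT x) (hg' x)]
  ring

lemma hdel_formula {nT : ℕ} (i0 iT : Fin nT) {f g : (Fin nT → ℝ) → ℝ}
    (hf : ContDiff ℝ (⊤:ℕ∞) f) (hg : ContDiff ℝ (⊤:ℕ∞) g) (x : Fin nT → ℝ) :
    hdelOp (fun f => pderiv1 i0 (pderiv1 iT f)) f g x
      = -(pderiv1 i0 f x * pderiv1 iT g x) - pderiv1 iT f x * pderiv1 i0 g x := by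
  simp only [hdelOp, D_mul i0 iT hf hg x]
  ring

lemma pderiv1_coord_mul {nT : ℕ} (i0 iT : Fin nT) (hne : i0 ≠ iT) (x : Fin nT → ℝ) :
    pderiv1 iT (fun y : Fin nT → ℝ => y i0 * y iT) x = x i0 := by
  have h0 := hasFDerivAt_apply (𝕜 := ℝ) i0 x
  have hT := hasFDerivAt_apply (𝕜 := ℝ) iT x
  have := (h0.fun_mul hT).fderiv
  simp only [pderiv1, this]
  have hs : (Pi.single iT 1 : Fin nT → ℝ) i0 = 0 := Pi.single_eq_of_ne hne 1
  simp [Pi.single_eq_same, hs]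

lemma pderiv1_coord {nT : ℕ} (i : Fin nT) (x : Fin nT → ℝ) :
    pderiv1 i (fun y : Fin nT → ℝ => y i) x = 1 := by
  have h := hasFDerivAt_apply (𝕜 := ℝ) i x
  simp [pderiv1, h.fderiv, Pi.single_eq_same]

/-- For `D = ∂²/∂x¹∂x^{n_T}`: the function `h = x¹·x^{n_T}` lies in
the `0`-component but `D h = 1` does not, so `D` is not a constraint map; nevertheless
`δD` is a constraint bilinear map lying in the `0`-component: on smooth `N`-component
functions it is `−∂₁f·∂_{n_T}g − ∂_{n_T}f·∂₁g`, which vanishes at every point of `C`. -/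
theorem coboundary_of_nonconstraint_operator (n0 nN nT : ℕ)
    (h1 : 0 < n0) (h2 : n0 < nN) (h3 : nN < nT) :
    let i0 : Fin nT := ⟨0, by omega⟩
    let iT : Fin nT := ⟨nT - 1, by omega⟩
    let D : ((Fin nT → ℝ) → ℝ) → (Fin nT → ℝ) → ℝ := fun f => pderiv1 i0 (pderiv1 iT f)
    let h : (Fin nT → ℝ) → ℝ := fun x => x i0 * x iT
    MemZ nN h ∧
    (∀ x, D h x = 1) ∧
    ¬ MemZ nN (D h) ∧
    ¬ ((∀ f, ContDiff ℝ (⊤ : ℕ∞) f → MemN n0 nN f → MemN n0 nN (D f)) ∧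
        (∀ f, ContDiff ℝ (⊤ : ℕ∞) f → MemZ nN f → MemZ nN (D f))) ∧
    IsConstraintBilin n0 nN (hdelOp D) ∧
    (∀ f g : (Fin nT → ℝ) → ℝ, ContDiff ℝ (⊤ : ℕ∞) f → ContDiff ℝ (⊤ : ℕ∞) g →
      MemN n0 nN f → MemN n0 nN g →
      (∀ x, hdelOp D f g x
          = -(pderiv1 i0 f x * pderiv1 iT g x) - pderiv1 iT f x * pderiv1 i0 g x) ∧
      (∀ x, OnC nN x → hdelOp D f g x = 0)) := by
  intro i0 iT D h
  have hne : i0 ≠ iT := by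
    intro hEq
    have : (0 : ℕ) = nT - 1 := congrArg Fin.val hEq
    omega
  -- smoothness of h
  have hcoord : ∀ j : Fin nT, ContDiff ℝ (⊤:ℕ∞) (fun x : Fin nT → ℝ => x j) := fun j =>
    (ContinuousLinearMap.proj (R := ℝ) (φ := fun _ : Fin nT => ℝ) j).contDiff
  have hsm : ContDiff ℝ (⊤:ℕ∞) h := (hcoord i0).mul (hcoord iT)
  -- D h = 1
  have hDh : ∀ x, D h x = 1 := by
    intro x
    show pderiv1 i0 (pderiv1 iT h) x = 1
    have : pderiv1 iT h = fun y => y i0 := funext fun y => pderiv1_coord_mul i0 iT hne y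
    rw [this, pderiv1_coord]
  -- h in the zero component
  have hZh : MemZ nN h := by
    intro x hx
    have : x iT = 0 := hx iT (by simp [iT]; omega)
    simp [h, this]
  -- origin lies on C
  have h0C : OnC nN (fun _ : Fin nT => (0:ℝ)) := fun _ _ => rfl
  have hnotZ : ¬ MemZ nN (D h) := by
    intro H
    have := H (fun _ : Fin nT => 0) h0C
    rw [hDh] at this
    exact one_ne_zero this
  refine ⟨hZh, hDh, hnotZ, ?_, ?_, ?_⟩
  · rintro ⟨_, H2⟩
    exact hnotZ (H2 h hsm hZh)
  · constructor
    · intro f g hf hg hNf hNg i hi x hx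
      have hB : hdelOp D f g = fun y =>
          -(pderiv1 i0 f y * pderiv1 iT g y) - pderiv1 iT f y * pderiv1 i0 g y :=
        funext fun y => hdel_formula i0 iT hf hg y
      have hφ : ContDiff ℝ (⊤:ℕ∞) (fun y =>
          -(pderiv1 i0 f y * pderiv1 iT g y) - pderiv1 iT f y * pderiv1 i0 g y) :=
        (((pderiv1_contDiff i0 hf).mul (pderiv1_contDiff iT hg)).neg).sub
          ((pderiv1_contDiff iT hf).mul (pderiv1_contDiff i0 hg))
      have hz : MemZ nN (fun y =>
          -(pderiv1 i0 f y * pderiv1 iT g y) - pderiv1 iT f y * pderiv1 i0 g y) := by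
        intro y hy
        have e1 : pderiv1 i0 f y = 0 := hNf i0 h1 y hy
        have e2 : pderiv1 i0 g y = 0 := hNg i0 h1 y hy
        simp [e1, e2]
      rw [hB]
      exact tangent_deriv (contdiff_differentiable hφ) hz (by omega) hx
    · intro f g hf hg hcase x hx
      have hB := hdel_formula i0 iT hf hg x
      have e0 : pderiv1 i0 f x = 0 ∧ pderiv1 i0 g x = 0 := by
        rcases hcase with ⟨hZf, hNg⟩ | ⟨hNf, hZg⟩
        · exact ⟨tangent_deriv (contdiff_differentiable hf) hZf (by simp [i0]; omega) hx,
            hNg i0 h1 x hx⟩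
        · exact ⟨hNf i0 h1 x hx,
            tangent_deriv (contdiff_differentiable hg) hZg (by simp [i0]; omega) hx⟩
      show hdelOp D f g x = 0
      rw [hB, e0.1, e0.2]
      ring
  · intro f g hf hg hNf hNg
    refine ⟨fun x => hdel_formula i0 iT hf hg x, fun x hx => ?_⟩
    have e1 : pderiv1 i0 f x = 0 := hNf i0 h1 x hx
    have e2 : pderiv1 i0 g x = 0 := hNg i0 h1 x hx
    rw [hdel_formula i0 iT hf hg x, e1, e2]
    ring
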